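/- arXiv:1105.1706 — 5 statements merged into one kernel-verified Lean document; each statement's English description precedes it below -/
import Mathlib

section
/- In the polynomial ring ℚ[A,B,λ,μ] the following two identities hold, where c₄ denotes c₄(A,B) and c₆ denotes c₆(A,B): c₄(λA − μ·∂D/∂B, λB + μ·∂D/∂A) = c₄λ⁴ + 4c₆λ³μ + 6c₄²λ²μ² + 4c₄c₆λμ³ − (3c₄³ − 4c₆²)μ⁴, and c₆(λA − μ·∂D/∂B, λB + μ·∂D/∂A) = c₆λ⁶ + 6c₄²λ⁵μ + 15c₄c₆λ⁴μ² + 20c₆²λ³μ³ + 15c₄²c₆λ²μ⁴ + 6(3c₄⁴ − 2c₄c₆²)λμ⁵ + (9c₄³c₆ − 8c₆³)μ⁶. (This is the computational content of the formula, due to Rubin–Silverberg and re-proved in the paper, for the family of elliptic curves parametrised by Y_E(3): the elliptic curves directly 3-congruent to y² = x³ − 27c₄x − 54c₆ are y² = x³ − 27𝐜₄(λ,μ)x − 54𝐜₆(λ,μ) with 𝐜₄, 𝐜₆ the right-hand sides above.) -/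
open MvPolynomial

noncomputable section

/-- The polynomial ring ℚ[A,B,λ,μ]. -/
abbrev R1 : Type := MvPolynomial (Fin 4) ℚ

/-- The binary form c₄(X,Y) = −216X³Y + Y⁴, as a function of two polynomial arguments. -/
def c4bin (A B : R1) : R1 := -216 * A ^ 3 * B + B ^ 4
/-- The binary form c₆(X,Y) = 5832X⁶ − 540X³Y³ − Y⁶. -/
def c6bin (A B : R1) : R1 := 5832 * A ^ 6 - 540 * A ^ 3 * B ^ 3 - B ^ 6
/-- ∂D/∂A = −108A³ − B³, for D(A,B) = −27A⁴ − AB³. -/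
def dDdA (A B : R1) : R1 := -108 * A ^ 3 - B ^ 3
/-- ∂D/∂B = −3AB². -/
def dDdB (A B : R1) : R1 := -3 * A * B ^ 2

/-- The two identities giving the family of elliptic curves parametrised by Y_E(3):
c₄ and c₆ evaluated at (λA − μ·∂D/∂B, λB + μ·∂D/∂A) agree with the Rubin–Silverberg
binary forms 𝐜₄(λ,μ) and 𝐜₆(λ,μ). -/
theorem stmt1 :
    (c4bin (X 2 * X 0 - X 3 * dDdB (X 0) (X 1)) (X 2 * X 1 + X 3 * dDdA (X 0) (X 1)) =
      c4bin (X 0) (X 1) * X 2 ^ 4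
        + 4 * c6bin (X 0) (X 1) * X 2 ^ 3 * X 3
        + 6 * c4bin (X 0) (X 1) ^ 2 * X 2 ^ 2 * X 3 ^ 2
        + 4 * c4bin (X 0) (X 1) * c6bin (X 0) (X 1) * X 2 * X 3 ^ 3
        - (3 * c4bin (X 0) (X 1) ^ 3 - 4 * c6bin (X 0) (X 1) ^ 2) * X 3 ^ 4)
    ∧
    (c6bin (X 2 * X 0 - X 3 * dDdB (X 0) (X 1)) (X 2 * X 1 + X 3 * dDdA (X 0) (X 1)) =
      c6bin (X 0) (X 1) * X 2 ^ 6
        + 6 * c4bin (X 0) (X 1) ^ 2 * X 2 ^ 5 * X 3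
        + 15 * c4bin (X 0) (X 1) * c6bin (X 0) (X 1) * X 2 ^ 4 * X 3 ^ 2
        + 20 * c6bin (X 0) (X 1) ^ 2 * X 2 ^ 3 * X 3 ^ 3
        + 15 * c4bin (X 0) (X 1) ^ 2 * c6bin (X 0) (X 1) * X 2 ^ 2 * X 3 ^ 4
        + 6 * (3 * c4bin (X 0) (X 1) ^ 4 - 2 * c4bin (X 0) (X 1) * c6bin (X 0) (X 1) ^ 2)
            * X 2 * X 3 ^ 5
        + (9 * c4bin (X 0) (X 1) ^ 3 * c6bin (X 0) (X 1) - 8 * c6bin (X 0) (X 1) ^ 3)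
            * X 3 ^ 6) := by
  constructor <;> (unfold c4bin c6bin dDdA dDdB; ring)

end
end

section
/- Each of the four polynomials F, H, c₄, c₆ ∈ ℂ[a,b,c] is invariant under both generators of the group G ≅ PSL₂(𝔽₇): writing P∘M for the polynomial obtained from P by the linear substitution (a,b,c)ᵀ ↦ M·(a,b,c)ᵀ, one has P∘ρS = P and P∘ρT = P for P ∈ {F, H, c₄, c₆}, where ρT = diag(ζ, ζ⁴, ζ²) and ρS = g₇⁻¹·[[ζ−ζ⁶, ζ²−ζ⁵, ζ⁴−ζ³], [ζ²−ζ⁵, ζ⁴−ζ³, ζ−ζ⁶], [ζ⁴−ζ³, ζ−ζ⁶, ζ²−ζ⁵]]. -/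
open MvPolynomial

noncomputable section

/-- The polynomial ring ℂ[a,b,c]. -/
abbrev RC : Type := MvPolynomial (Fin 3) ℂ

/-- The Klein quartic F = a³b + b³c + c³a. -/
def FC : RC := X 0 ^ 3 * X 1 + X 1 ^ 3 * X 2 + X 2 ^ 3 * X 0

/-- The 3×3 Hessian matrix of a polynomial in ℂ[a,b,c]. -/
def hessC (p : RC) : Matrix (Fin 3) (Fin 3) RC :=
  Matrix.of fun i j => pderiv i (pderiv j p)

/-- The gradient of a polynomial in ℂ[a,b,c]. -/
def gradC (p : RC) : Fin 3 → RC := fun i => pderiv i p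

/-- H = (−1/54)·det(Hessian of F). -/
def HC : RC := C (-1/54 : ℂ) * (hessC FC).det

/-- The 4×4 bordered Hessian matrix of F and H. -/
def M4C : Matrix (Fin 4) (Fin 4) RC :=
  Matrix.of fun i j =>
    if hi : (i : ℕ) < 3 then
      if hj : (j : ℕ) < 3 then hessC FC ⟨i, hi⟩ ⟨j, hj⟩ else gradC HC ⟨i, hi⟩
    else
      if hj : (j : ℕ) < 3 then gradC HC ⟨j, hj⟩ else 0

/-- c₄ = (1/9)·det M₄. -/
def c4C : RC := C (1/9 : ℂ) * M4C.det

/-- c₆ = (1/14)·det of the Jacobian matrix with rows ∇F, ∇H, ∇c₄. -/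
def c6C : RC := C (1/14 : ℂ) * (Matrix.of ![gradC FC, gradC HC, gradC c4C]).det

/-- The linear substitution P ∘ M : replace (a,b,c)ᵀ by M·(a,b,c)ᵀ. -/
def substC (M : Matrix (Fin 3) (Fin 3) ℂ) (p : RC) : RC :=
  aeval (fun i => ∑ j : Fin 3, C (M i j) * X j) p

/-- The image ρ(S) of S = [[0,1],[−1,0]] under the 3-dimensional representation. -/
def rhoS (ζ : ℂ) : Matrix (Fin 3) (Fin 3) ℂ :=
  (1 + 2 * (ζ ^ 3 + ζ ^ 5 + ζ ^ 6))⁻¹ •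
    Matrix.of ![![ζ - ζ ^ 6, ζ ^ 2 - ζ ^ 5, ζ ^ 4 - ζ ^ 3],
                ![ζ ^ 2 - ζ ^ 5, ζ ^ 4 - ζ ^ 3, ζ - ζ ^ 6],
                ![ζ ^ 4 - ζ ^ 3, ζ - ζ ^ 6, ζ ^ 2 - ζ ^ 5]]

/-- The image ρ(T) of T = [[1,1],[0,1]] : the diagonal matrix diag(ζ, ζ⁴, ζ²). -/
def rhoT (ζ : ℂ) : Matrix (Fin 3) (Fin 3) ℂ :=
  Matrix.diagonal ![ζ, ζ ^ 4, ζ ^ 2]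


/-! ### Chain rule and covariance lemmas -/

open Matrix

lemma substC_mul (M : Matrix (Fin 3) (Fin 3) ℂ) (a b : RC) :
    substC M (a * b) = substC M a * substC M b :=
  _root_.map_mul (aeval fun i => ∑ j : Fin 3, C (M i j) * X j) a b

lemma substC_C (M : Matrix (Fin 3) (Fin 3) ℂ) (a : ℂ) : substC M (C a) = C a := by
  simp [substC]

lemma pderiv_substC (M : Matrix (Fin 3) (Fin 3) ℂ) (i : Fin 3) (p : RC) :
    pderiv i (substC M p) = ∑ j : Fin 3, C (M j i) * substC M (pderiv j p) := by
  induction p using MvPolynomial.induction_on with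
  | C a => simp [substC]
  | add p q hp hq =>
    simp only [substC, _root_.map_add] at hp hq ⊢
    rw [hp, hq, ← Finset.sum_add_distrib]
    simp [mul_add]
  | mul_X p k hp =>
    simp only [substC, _root_.map_mul, aeval_X] at hp ⊢
    rw [pderiv_mul, hp]
    have hL : pderiv i (∑ j : Fin 3, C (M k j) * X j) = C (M k i) := by
      rw [_root_.map_sum]
      simp [pderiv_C_mul, pderiv_X, Pi.single_apply]
    have hR : ∀ j : Fin 3, pderiv j (p * X k) = pderiv j p * X k + (if j = k then p else 0) := by
      intro j
      rw [pderiv_mul, pderiv_X, Pi.single_apply]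
      by_cases h : j = k
      · simp [h]
      · simp [h, Ne.symm h]
    simp only [hL, hR, _root_.map_add, _root_.map_mul, aeval_X,
      apply_ite (aeval fun i => ∑ j : Fin 3, C (M i j) * X j), _root_.map_zero, mul_add, mul_ite,
      mul_zero, Finset.sum_add_distrib, Finset.sum_ite_eq', Finset.mem_univ, if_true]
    rw [Finset.sum_mul]
    simp only [mul_assoc]
    ring

lemma eval_substC (M : Matrix (Fin 3) (Fin 3) ℂ) (x : Fin 3 → ℂ) (p : RC) :
    eval x (substC M p) = eval (fun i => ∑ j : Fin 3, M i j * x j) p := by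
  induction p using MvPolynomial.induction_on with
  | C a => simp [substC]
  | add p q hp hq =>
    simp only [substC, _root_.map_add] at hp hq ⊢
    rw [hp, hq]
  | mul_X p k hp =>
    simp only [substC, _root_.map_mul] at hp ⊢
    rw [hp]
    congr 1
    simp

lemma grad_rel (M : Matrix (Fin 3) (Fin 3) ℂ) (p : RC) (h : substC M p = p) (i : Fin 3) :
    pderiv i p = ∑ k : Fin 3, C (M k i) * substC M (pderiv k p) := by
  conv_lhs => rw [← h]
  rw [pderiv_substC]

lemma hessC_substC (M : Matrix (Fin 3) (Fin 3) ℂ) (p : RC) :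
    hessC (substC M p) = (M.map C)ᵀ * (hessC p).map (substC M) * (M.map C) := by
  refine Matrix.ext fun i j => ?_
  simp only [hessC, Matrix.of_apply, Matrix.mul_apply, Matrix.map_apply, Matrix.transpose_apply,
    pderiv_substC, _root_.map_sum, _root_.map_add, pderiv_C_mul, Fin.sum_univ_three, mul_add,
    add_mul]
  ring

lemma substC_det {n : Type*} [Fintype n] [DecidableEq n] (M : Matrix (Fin 3) (Fin 3) ℂ)
    (A : Matrix n n RC) : substC M A.det = (A.map (substC M)).det := by
  have h : substC M =
      ⇑((aeval fun i => ∑ j : Fin 3, C (M i j) * X j : RC →ₐ[ℂ] RC) : RC →+* RC) := rfl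
  rw [h, RingHom.map_det, RingHom.mapMatrix_apply]

lemma det_map_C (M : Matrix (Fin 3) (Fin 3) ℂ) : (M.map C).det = (C M.det : RC) :=
  (RingHom.map_det (C : ℂ →+* RC) M).symm

/-! ### Invariance of H, c₄, c₆ given invariance of F and det = 1 -/

lemma substC_HC (M : Matrix (Fin 3) (Fin 3) ℂ) (hF : substC M FC = FC) (hdet : M.det = 1) :
    substC M HC = HC := by
  have h := hessC_substC M FC
  rw [hF] at h
  have h2 : ((hessC FC).map (substC M)).det = (hessC FC).det := by
    conv_rhs => rw [h]
    rw [Matrix.det_mul, Matrix.det_mul, Matrix.det_transpose, det_map_C, hdet, _root_.map_one,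
      one_mul, mul_one]
  rw [HC, substC_mul, substC_C, substC_det, h2]

def colG : Matrix (Fin 3) (Fin 1) RC := Matrix.of fun i _ => gradC HC i
def rowG : Matrix (Fin 1) (Fin 3) RC := Matrix.of fun _ j => gradC HC j

def FB : Matrix (Fin 3 ⊕ Fin 1) (Fin 3 ⊕ Fin 1) RC := Matrix.fromBlocks (hessC FC) colG rowG 0

lemma M4C_eq : M4C = (Matrix.reindex finSumFinEquiv finSumFinEquiv) FB := by
  ext i j
  fin_cases i <;> fin_cases j <;> rfl

def NB (M : Matrix (Fin 3) (Fin 3) ℂ) : Matrix (Fin 3 ⊕ Fin 1) (Fin 3 ⊕ Fin 1) RC :=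
  Matrix.fromBlocks (M.map C) 0 0 1

lemma map_zero_substC (M : Matrix (Fin 3) (Fin 3) ℂ) {k l : Type*} :
    (0 : Matrix k l RC).map (substC M) = 0 := by
  refine Matrix.ext fun i j => ?_
  simp [Matrix.map_apply, substC]

lemma substC_c4C (M : Matrix (Fin 3) (Fin 3) ℂ) (hF : substC M FC = FC)
    (hH : substC M HC = HC) (hdet : M.det = 1) : substC M c4C = c4C := by
  have hhess : hessC FC = (M.map C)ᵀ * (hessC FC).map (substC M) * (M.map C) := by
    have h := hessC_substC M FC
    rwa [hF] at h
  have hcol : colG = (M.map C)ᵀ * colG.map (substC M) := by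
    refine Matrix.ext fun i j => ?_
    simp only [colG, Matrix.mul_apply, Matrix.map_apply, Matrix.transpose_apply,
      Matrix.of_apply, gradC]
    exact grad_rel M HC hH i
  have hrow : rowG = rowG.map (substC M) * (M.map C) := by
    refine Matrix.ext fun i j => ?_
    simp only [rowG, Matrix.mul_apply, Matrix.map_apply, Matrix.transpose_apply,
      Matrix.of_apply, gradC]
    rw [grad_rel M HC hH j]
    exact Finset.sum_congr rfl fun k _ => mul_comm _ _
  have key : FB = (NB M)ᵀ * FB.map (substC M) * NB M := by
    rw [NB, FB, Matrix.fromBlocks_transpose, Matrix.fromBlocks_map,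
      Matrix.fromBlocks_multiply, Matrix.fromBlocks_multiply]
    simp only [Matrix.transpose_zero, Matrix.transpose_one, map_zero_substC, Matrix.zero_mul,
      Matrix.mul_zero, Matrix.one_mul, Matrix.mul_one, add_zero, zero_add]
    rw [← hhess]
    congr 1
  have hdetNB : (NB M).det = 1 := by
    rw [NB, Matrix.det_fromBlocks_zero₂₁, Matrix.det_one, mul_one, det_map_C, hdet, _root_.map_one]
  have hmain : (M4C.map (substC M)).det = M4C.det := by
    have hmr : M4C.map (substC M) =
        (Matrix.reindex finSumFinEquiv finSumFinEquiv) (FB.map (substC M)) := by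
      rw [M4C_eq]; rfl
    rw [hmr, M4C_eq, Matrix.det_reindex_self, Matrix.det_reindex_self]
    conv_rhs => rw [key]
    rw [Matrix.det_mul, Matrix.det_mul, Matrix.det_transpose, hdetNB, one_mul, mul_one]
  rw [c4C, substC_mul, substC_C, substC_det, hmain]

lemma substC_c6C (M : Matrix (Fin 3) (Fin 3) ℂ) (hF : substC M FC = FC)
    (hH : substC M HC = HC) (hc4 : substC M c4C = c4C) (hdet : M.det = 1) :
    substC M c6C = c6C := by
  set J : Matrix (Fin 3) (Fin 3) RC := Matrix.of ![gradC FC, gradC HC, gradC c4C] with hJ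
  have key : J = J.map (substC M) * (M.map C) := by
    have hJrow : ∀ (p : Fin 3) (i : Fin 3), J p i = pderiv i (![FC, HC, c4C] p) := by
      intro p i
      fin_cases p <;> rfl
    have hPs : ∀ p : Fin 3, substC M (![FC, HC, c4C] p) = ![FC, HC, c4C] p := by
      intro p
      fin_cases p
      · exact hF
      · exact hH
      · exact hc4
    refine Matrix.ext fun p i => ?_
    rw [Matrix.mul_apply]
    simp only [Matrix.map_apply, hJrow]
    rw [grad_rel M _ (hPs p) i]
    exact Finset.sum_congr rfl fun k _ => mul_comm _ _
  have hmain : (J.map (substC M)).det = J.det := by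
    conv_rhs => rw [key]
    rw [Matrix.det_mul, det_map_C, hdet, _root_.map_one, mul_one]
  rw [c6C, substC_mul, substC_C, substC_det, hmain]

/-! ### Arithmetic facts about ζ -/

section zeta
variable {ζ : ℂ} (hζ : IsPrimitiveRoot ζ 7)

lemma cyc7 (hζ : IsPrimitiveRoot ζ 7) : ζ^6 + ζ^5 + ζ^4 + ζ^3 + ζ^2 + ζ + 1 = 0 := by
  have h7 : ζ ^ 7 = 1 := hζ.pow_eq_one
  have hne : ζ - 1 ≠ 0 := sub_ne_zero.mpr (hζ.ne_one (by norm_num))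
  have : (ζ - 1) * (ζ^6 + ζ^5 + ζ^4 + ζ^3 + ζ^2 + ζ + 1) = 0 := by linear_combination h7
  rcases mul_eq_zero.mp this with h | h
  · exact absurd h hne
  · exact h

lemma gsq (hζ : IsPrimitiveRoot ζ 7) :
    (1 + 2 * (ζ ^ 3 + ζ ^ 5 + ζ ^ 6)) ^ 2 = -7 := by
  have hΦ := cyc7 hζ
  linear_combination ((8 : ℂ) + (-8 : ℂ) * ζ + (4 : ℂ) * ζ^3 + (-4 : ℂ) * ζ^4 + (4 : ℂ) * ζ^5 + (4 : ℂ) * ζ^6) * hΦ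

lemma ginv (hζ : IsPrimitiveRoot ζ 7) :
    (1 + 2 * (ζ ^ 3 + ζ ^ 5 + ζ ^ 6))⁻¹ = -(1 + 2 * (ζ ^ 3 + ζ ^ 5 + ζ ^ 6)) / 7 := by
  have h2 := gsq hζ
  refine inv_eq_of_mul_eq_one_right ?_
  field_simp
  linear_combination -h2

lemma rhoS_eq (hζ : IsPrimitiveRoot ζ 7) :
    rhoS ζ = (-(1 + 2 * (ζ ^ 3 + ζ ^ 5 + ζ ^ 6)) / 7) •
      Matrix.of ![![ζ - ζ ^ 6, ζ ^ 2 - ζ ^ 5, ζ ^ 4 - ζ ^ 3],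
                  ![ζ ^ 2 - ζ ^ 5, ζ ^ 4 - ζ ^ 3, ζ - ζ ^ 6],
                  ![ζ ^ 4 - ζ ^ 3, ζ - ζ ^ 6, ζ ^ 2 - ζ ^ 5]] := by
  rw [rhoS, ginv hζ]

end zeta

/-! ### The computational facts -/

lemma det_rhoT {ζ : ℂ} (hζ : IsPrimitiveRoot ζ 7) : (rhoT ζ).det = 1 := by
  have h7 : ζ ^ 7 = 1 := hζ.pow_eq_one
  rw [rhoT, Matrix.det_diagonal]
  simp [Fin.prod_univ_three]
  linear_combination h7

lemma det_rhoS {ζ : ℂ} (hζ : IsPrimitiveRoot ζ 7) : (rhoS ζ).det = 1 := by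
  have hΦ := cyc7 hζ
  rw [rhoS_eq hζ, Matrix.det_smul, Matrix.det_fin_three]
  simp only [Matrix.of_apply, Matrix.cons_val', Matrix.cons_val_zero, Matrix.cons_val_one,
    Matrix.head_cons, Matrix.cons_val_two, Matrix.tail_cons, Matrix.empty_val',
    Matrix.cons_val_fin_one, Matrix.head_fin_const, smul_eq_mul, Fintype.card_fin]
  linear_combination ((-1 : ℂ) + (1 : ℂ) * ζ + (1/343 : ℂ) * ζ^3 + (-1/343 : ℂ) * ζ^4 + (10/343 : ℂ) * ζ^6 + (-356/343 : ℂ) * ζ^7 + (349/343 : ℂ) * ζ^8 + (32/343 : ℂ) * ζ^9 + (-46/343 : ℂ) * ζ^10 + (5/49 : ℂ) * ζ^11 + (27/343 : ℂ) * ζ^12 + (-62/343 : ℂ) * ζ^13 + (-320/343 : ℂ) * ζ^14 + (374/343 : ℂ) * ζ^15 + (-2/49 : ℂ) * ζ^16 + (-148/343 : ℂ) * ζ^17 + (178/343 : ℂ) * ζ^18 + (-104/343 : ℂ) * ζ^19 + (-188/343 : ℂ) * ζ^20 + (4/343 : ℂ) * ζ^21 + (20/49 : ℂ) * ζ^22 +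 (4/343 : ℂ) * ζ^23 + (60/343 : ℂ) * ζ^24 + (96/343 : ℂ) * ζ^25 + (-8/49 : ℂ) * ζ^26 + (-40/343 : ℂ) * ζ^27 + (-16/343 : ℂ) * ζ^29 + (-8/343 : ℂ) * ζ^30) * hΦ

lemma FT_inv {ζ : ℂ} (hζ : IsPrimitiveRoot ζ 7) : substC (rhoT ζ) FC = FC := by
  have h7 : ζ ^ 7 = 1 := hζ.pow_eq_one
  apply MvPolynomial.funext
  intro x
  rw [eval_substC]
  simp [FC, rhoT, Matrix.diagonal_apply, Fin.sum_univ_three]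
  linear_combination ((x 0)^3 * (x 1) + (x 2)^3 * (x 0) + (ζ^7 + 1) * (x 1)^3 * (x 2)) * h7

set_option maxHeartbeats 1600000 in
set_option maxRecDepth 16000 in
lemma FS_inv {ζ : ℂ} (hζ : IsPrimitiveRoot ζ 7) : substC (rhoS ζ) FC = FC := by
  have hΦ := cyc7 hζ
  apply MvPolynomial.funext
  intro x
  rw [eval_substC]
  have hfun : (fun i => ∑ j : Fin 3, rhoS ζ i j * x j) =
      ![(-4/7 : ℂ) * (x 2) + (-2/7 : ℂ) * (x 1) + (-1/7 : ℂ) * (x 0) + (-2/7 : ℂ) * ζ^2 * (x 2) + (-1/7 : ℂ) * ζ^2 * (x 1) + (3/7 : ℂ) * ζ^2 * (x 0) + (-3/7 : ℂ) * ζ^3 * (x 2) + (2/7 : ℂ) * ζ^3 * (x 1) + (1/7 : ℂ) * ζ^3 * (x 0) + (-3/7 : ℂ) * ζ^4 * (x 2) + (2/7 : ℂ) * ζ^4 * (x 1) + (1/7 : ℂ) * ζ^4 * (x 0) + (-2/7 : ℂ) * ζ^5 * (x 2) + (-1/7 : ℂ) * ζ^5 * (x 1) + (3/7 : ℂ) *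 ζ^5 * (x 0), (-1/7 : ℂ) * (x 2) + (-4/7 : ℂ) * (x 1) + (-2/7 : ℂ) * (x 0) + (3/7 : ℂ) * ζ^2 * (x 2) + (-2/7 : ℂ) * ζ^2 * (x 1) + (-1/7 : ℂ) * ζ^2 * (x 0) + (1/7 : ℂ) * ζ^3 * (x 2) + (-3/7 : ℂ) * ζ^3 * (x 1) + (2/7 : ℂ) * ζ^3 * (x 0) + (1/7 : ℂ) * ζ^4 * (x 2) + (-3/7 : ℂ) * ζ^4 * (x 1) + (2/7 : ℂ) * ζ^4 * (x 0) + (3/7 : ℂ) * ζ^5 * (x 2) + (-2/7 : ℂ) * ζ^5 * (x 1) + (-1/7 : ℂ) * ζ^5 * (x 0), (-2/7 : ℂ) * (x 2) + (-1/7 : ℂ) * (x 1) + (-4/7 : ℂ) * (x 0) + (-1/7 : ℂ) * ζ^2 * (x 2) + (3/7 : ℂ) * ζ^2 * (x 1) + (-2/7 : ℂ) * ζ^2 * (x 0) + (2/7 : ℂ) * ζ^3 * (x 2) + (1/7 : ℂ) * ζ^3 * (x 1) + (-3/7 : ℂ) * ζ^3 * (x 0) + (2/7 : ℂ) * ζ^4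 * (x 2) + (1/7 : ℂ) * ζ^4 * (x 1) + (-3/7 : ℂ) * ζ^4 * (x 0) + (-1/7 : ℂ) * ζ^5 * (x 2) + (3/7 : ℂ) * ζ^5 * (x 1) + (-2/7 : ℂ) * ζ^5 * (x 0)] := by
    funext i
    fin_cases i
    · show ∑ j : Fin 3, rhoS ζ 0 j * x j = (-4/7 : ℂ) * (x 2) + (-2/7 : ℂ) * (x 1) + (-1/7 : ℂ) * (x 0) + (-2/7 : ℂ) * ζ^2 * (x 2) + (-1/7 : ℂ) * ζ^2 * (x 1) + (3/7 : ℂ) * ζ^2 * (x 0) + (-3/7 : ℂ) * ζ^3 * (x 2) + (2/7 : ℂ) * ζ^3 * (x 1) + (1/7 : ℂ) * ζ^3 * (x 0) + (-3/7 : ℂ) * ζ^4 * (x 2) + (2/7 : ℂ) * ζ^4 * (x 1) + (1/7 : ℂ) * ζ^4 * (x 0) + (-2/7 : ℂ) * ζ^5 * (x 2) + (-1/7 : ℂ) * ζ^5 * (x 1) + (3/7 : ℂ) * ζ^5 * (x 0)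
      rw [rhoS_eq hζ]
      simp only [Matrix.smul_apply, Matrix.of_apply, Matrix.cons_val_zero, Matrix.cons_val_one,
        Matrix.cons_val_two, Matrix.head_cons, Matrix.tail_cons, Matrix.vecHead, Matrix.vecTail,
        smul_eq_mul, Fin.sum_univ_three, Function.comp_apply, Fin.succ_zero_eq_one,
        Fin.succ_one_eq_two]
      linear_combination ((4/7 : ℂ) * (x 2) + (2/7 : ℂ) * (x 1) + (1/7 : ℂ) * (x 0) + (-4/7 : ℂ) * ζ * (x 2) + (-2/7 : ℂ) * ζ * (x 1) + (-2/7 : ℂ) * ζ * (x 0) + (2/7 : ℂ) * ζ^2 * (x 2) + (-2/7 : ℂ) * ζ^2 * (x 0) + (2/7 : ℂ) * ζ^3 * (x 2) + (-2/7 : ℂ) * ζ^3 * (x 1) + (2/7 : ℂ) * ζ^3 * (x 0) + (-2/7 : ℂ) * ζ^4 * (x 2) + (-2/7 : ℂ) * ζ^4 * (x 0) + (2/7 : ℂ) * ζ^5 * (x 1) + (2/7 : ℂ) * ζ^6 * (x 0)) * hΦ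
    · show ∑ j : Fin 3, rhoS ζ 1 j * x j = (-1/7 : ℂ) * (x 2) + (-4/7 : ℂ) * (x 1) + (-2/7 : ℂ) * (x 0) + (3/7 : ℂ) * ζ^2 * (x 2) + (-2/7 : ℂ) * ζ^2 * (x 1) + (-1/7 : ℂ) * ζ^2 * (x 0) + (1/7 : ℂ) * ζ^3 * (x 2) + (-3/7 : ℂ) * ζ^3 * (x 1) + (2/7 : ℂ) * ζ^3 * (x 0) + (1/7 : ℂ) * ζ^4 * (x 2) + (-3/7 : ℂ) * ζ^4 * (x 1) + (2/7 : ℂ) * ζ^4 * (x 0) + (3/7 : ℂ) * ζ^5 * (x 2) + (-2/7 : ℂ) * ζ^5 * (x 1) + (-1/7 : ℂ) * ζ^5 * (x 0)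
      rw [rhoS_eq hζ]
      simp only [Matrix.smul_apply, Matrix.of_apply, Matrix.cons_val_zero, Matrix.cons_val_one,
        Matrix.cons_val_two, Matrix.head_cons, Matrix.tail_cons, Matrix.vecHead, Matrix.vecTail,
        smul_eq_mul, Fin.sum_univ_three, Function.comp_apply, Fin.succ_zero_eq_one,
        Fin.succ_one_eq_two]
      linear_combination ((1/7 : ℂ) * (x 2) + (4/7 : ℂ) * (x 1) + (2/7 : ℂ) * (x 0) + (-2/7 : ℂ) * ζ * (x 2) + (-4/7 : ℂ) * ζ * (x 1) + (-2/7 : ℂ) * ζ * (x 0) + (-2/7 : ℂ) * ζ^2 * (x 2) + (2/7 : ℂ) * ζ^2 * (x 1) + (2/7 : ℂ) * ζ^3 * (x 2) + (2/7 : ℂ) * ζ^3 * (x 1) + (-2/7 : ℂ) * ζ^3 * (x 0) + (-2/7 : ℂ) * ζ^4 * (x 2) + (-2/7 : ℂ) * ζ^4 * (x 1) + (2/7 : ℂ) * ζ^5 * (x 0) + (2/7 : ℂ) * ζ^6 * (x 2)) * hΦ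
    · show ∑ j : Fin 3, rhoS ζ 2 j * x j = (-2/7 : ℂ) * (x 2) + (-1/7 : ℂ) * (x 1) + (-4/7 : ℂ) * (x 0) + (-1/7 : ℂ) * ζ^2 * (x 2) + (3/7 : ℂ) * ζ^2 * (x 1) + (-2/7 : ℂ) * ζ^2 * (x 0) + (2/7 : ℂ) * ζ^3 * (x 2) + (1/7 : ℂ) * ζ^3 * (x 1) + (-3/7 : ℂ) * ζ^3 * (x 0) + (2/7 : ℂ) * ζ^4 * (x 2) + (1/7 : ℂ) * ζ^4 * (x 1) + (-3/7 : ℂ) * ζ^4 * (x 0) + (-1/7 : ℂ) * ζ^5 * (x 2) + (3/7 : ℂ) * ζ^5 * (x 1) + (-2/7 : ℂ) * ζ^5 * (x 0)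
      rw [rhoS_eq hζ]
      simp only [Matrix.smul_apply, Matrix.of_apply, Matrix.cons_val_zero, Matrix.cons_val_one,
        Matrix.cons_val_two, Matrix.head_cons, Matrix.tail_cons, Matrix.vecHead, Matrix.vecTail,
        smul_eq_mul, Fin.sum_univ_three, Function.comp_apply, Fin.succ_zero_eq_one,
        Fin.succ_one_eq_two]
      linear_combination ((2/7 : ℂ) * (x 2) + (1/7 : ℂ) * (x 1) + (4/7 : ℂ) * (x 0) + (-2/7 : ℂ) * ζ * (x 2) + (-2/7 : ℂ) * ζ * (x 1) + (-4/7 : ℂ) * ζ * (x 0) + (-2/7 : ℂ) * ζ^2 * (x 1) + (2/7 : ℂ) * ζ^2 * (x 0) + (-2/7 : ℂ) * ζ^3 * (x 2) + (2/7 : ℂ) * ζ^3 * (x 1) + (2/7 : ℂ) * ζ^3 * (x 0) + (-2/7 : ℂ) * ζ^4 * (x 1) + (-2/7 : ℂ) * ζ^4 * (x 0) + (2/7 : ℂ) * ζ^5 * (x 2) + (2/7 : ℂ) * ζ^6 * (x 1)) * hΦ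
  rw [hfun]
  simp only [FC, _root_.map_add, _root_.map_mul, _root_.map_pow, eval_X, Matrix.cons_val_zero,
    Matrix.cons_val_one, Matrix.head_cons, Matrix.cons_val_two, Matrix.tail_cons, Fin.isValue]
  linear_combination ((2/49 : ℂ) * (x 2)^4 + (9/49 : ℂ) * (x 1) * (x 2)^3 + (12/49 : ℂ) * (x 1)^2 * (x 2)^2 + (-41/49 : ℂ) * (x 1)^3 * (x 2) + (2/49 : ℂ) * (x 1)^4 + (-41/49 : ℂ) * (x 0) * (x 2)^3 + (18/49 : ℂ) * (x 0) * (x 1) * (x 2)^2 + (18/49 : ℂ) * (x 0) * (x 1)^2 * (x 2) + (9/49 : ℂ) * (x 0) * (x 1)^3 + (12/49 : ℂ) * (x 0)^2 * (x 2)^2 + (18/49 : ℂ) * (x 0)^2 * (x 1) * (x 2) + (12/49 : ℂ) * (x 0)^2 * (x 1)^2 + (9/49 : ℂ) * (x 0)^3 * (x 2) + (-41/49 : ℂ) * (x 0)^3 * (x 1) + (2/49 : ℂ) * (x 0)^4 + (-2/49 : ℂ) * ζ * (x 2)^4 + (-9/49 : ℂ) * ζ * (x 1) * (x 2)^3 +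 (-12/49 : ℂ) * ζ * (x 1)^2 * (x 2)^2 + (41/49 : ℂ) * ζ * (x 1)^3 * (x 2) + (-2/49 : ℂ) * ζ * (x 1)^4 + (41/49 : ℂ) * ζ * (x 0) * (x 2)^3 + (-18/49 : ℂ) * ζ * (x 0) * (x 1) * (x 2)^2 + (-18/49 : ℂ) * ζ * (x 0) * (x 1)^2 * (x 2) + (-9/49 : ℂ) * ζ * (x 0) * (x 1)^3 + (-12/49 : ℂ) * ζ * (x 0)^2 * (x 2)^2 + (-18/49 : ℂ) * ζ * (x 0)^2 * (x 1) * (x 2) + (-12/49 : ℂ) * ζ * (x 0)^2 * (x 1)^2 + (-9/49 : ℂ) * ζ * (x 0)^3 * (x 2) + (41/49 : ℂ) * ζ * (x 0)^3 * (x 1) + (-2/49 : ℂ) * ζ * (x 0)^4 + (-1/49 : ℂ) * ζ^2 * (x 2)^4 + (4/49 : ℂ) * ζ^2 * (x 1) * (x 2)^3 + (6/49 : ℂ) * ζ^2 * (x 1)^2 * (x 2)^2 + (6/49 : ℂ) * ζ^2 * (x 1)^3 * (x 2) + (-1/49 : ℂ) * ζ^2 * (x 1)^4 + (6/49 : ℂ)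 * ζ^2 * (x 0) * (x 2)^3 + (-15/49 : ℂ) * ζ^2 * (x 0) * (x 1) * (x 2)^2 + (-15/49 : ℂ) * ζ^2 * (x 0) * (x 1)^2 * (x 2) + (4/49 : ℂ) * ζ^2 * (x 0) * (x 1)^3 + (6/49 : ℂ) * ζ^2 * (x 0)^2 * (x 2)^2 + (-15/49 : ℂ) * ζ^2 * (x 0)^2 * (x 1) * (x 2) + (6/49 : ℂ) * ζ^2 * (x 0)^2 * (x 1)^2 + (4/49 : ℂ) * ζ^2 * (x 0)^3 * (x 2) + (6/49 : ℂ) * ζ^2 * (x 0)^3 * (x 1) + (-1/49 : ℂ) * ζ^2 * (x 0)^4 + (1/49 : ℂ) * ζ^3 * (x 2)^4 + (6/49 : ℂ) * ζ^3 * (x 1) * (x 2)^3 + (-3/49 : ℂ) * ζ^3 * (x 1)^2 * (x 2)^2 + (-1/7 : ℂ) * ζ^3 * (x 1)^3 * (x 2) + (1/49 : ℂ) * ζ^3 * (x 1)^4 + (-1/7 : ℂ) * ζ^3 * (x 0) * (x 2)^3 + (3/49 : ℂ) * ζ^3 * (x 0) * (x 1) * (x 2)^2 + (3/49 : ℂ)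 * ζ^3 * (x 0) * (x 1)^2 * (x 2) + (6/49 : ℂ) * ζ^3 * (x 0) * (x 1)^3 + (-3/49 : ℂ) * ζ^3 * (x 0)^2 * (x 2)^2 + (3/49 : ℂ) * ζ^3 * (x 0)^2 * (x 1) * (x 2) + (-3/49 : ℂ) * ζ^3 * (x 0)^2 * (x 1)^2 + (6/49 : ℂ) * ζ^3 * (x 0)^3 * (x 2) + (-1/7 : ℂ) * ζ^3 * (x 0)^3 * (x 1) + (1/49 : ℂ) * ζ^3 * (x 0)^4 + (-3/49 : ℂ) * ζ^4 * (x 2)^4 + (6/49 : ℂ) * ζ^4 * (x 1)^2 * (x 2)^2 + (15/49 : ℂ) * ζ^4 * (x 1)^3 * (x 2) + (-3/49 : ℂ) * ζ^4 * (x 1)^4 + (15/49 : ℂ) * ζ^4 * (x 0) * (x 2)^3 + (-18/49 : ℂ) * ζ^4 * (x 0) * (x 1) * (x 2)^2 + (-18/49 : ℂ) * ζ^4 * (x 0) * (x 1)^2 * (x 2) + (6/49 : ℂ) * ζ^4 * (x 0)^2 * (x 2)^2 + (-18/49 : ℂ) * ζ^4 * (x 0)^2 * (x 1) * (x 2) +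 (6/49 : ℂ) * ζ^4 * (x 0)^2 * (x 1)^2 + (15/49 : ℂ) * ζ^4 * (x 0)^3 * (x 1) + (-3/49 : ℂ) * ζ^4 * (x 0)^4 + (-1/7 : ℂ) * ζ^5 * (x 2)^4 + (15/49 : ℂ) * ζ^5 * (x 1) * (x 2)^3 + (15/49 : ℂ) * ζ^5 * (x 1)^2 * (x 2)^2 + (-5/49 : ℂ) * ζ^5 * (x 1)^3 * (x 2) + (-1/7 : ℂ) * ζ^5 * (x 1)^4 + (-5/49 : ℂ) * ζ^5 * (x 0) * (x 2)^3 + (-18/49 : ℂ) * ζ^5 * (x 0) * (x 1) * (x 2)^2 + (-18/49 : ℂ) * ζ^5 * (x 0) * (x 1)^2 * (x 2) + (15/49 : ℂ) * ζ^5 * (x 0) * (x 1)^3 + (15/49 : ℂ) * ζ^5 * (x 0)^2 * (x 2)^2 + (-18/49 : ℂ) * ζ^5 * (x 0)^2 * (x 1) * (x 2) + (15/49 : ℂ) * ζ^5 * (x 0)^2 * (x 1)^2 + (15/49 : ℂ) * ζ^5 * (x 0)^3 * (x 2) + (-5/49 : ℂ) * ζ^5 * (x 0)^3 * (x 1) +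 (-1/7 : ℂ) * ζ^5 * (x 0)^4 + (-2/49 : ℂ) * ζ^6 * (x 2)^4 + (12/49 : ℂ) * ζ^6 * (x 1) * (x 2)^3 + (-12/49 : ℂ) * ζ^6 * (x 1)^2 * (x 2)^2 + (-1/49 : ℂ) * ζ^6 * (x 1)^3 * (x 2) + (-2/49 : ℂ) * ζ^6 * (x 1)^4 + (-1/49 : ℂ) * ζ^6 * (x 0) * (x 2)^3 + (3/49 : ℂ) * ζ^6 * (x 0) * (x 1) * (x 2)^2 + (3/49 : ℂ) * ζ^6 * (x 0) * (x 1)^2 * (x 2) + (12/49 : ℂ) * ζ^6 * (x 0) * (x 1)^3 + (-12/49 : ℂ) * ζ^6 * (x 0)^2 * (x 2)^2 + (3/49 : ℂ) * ζ^6 * (x 0)^2 * (x 1) * (x 2) + (-12/49 : ℂ) * ζ^6 * (x 0)^2 * (x 1)^2 + (12/49 : ℂ) * ζ^6 * (x 0)^3 * (x 2) + (-1/49 : ℂ) * ζ^6 * (x 0)^3 * (x 1) + (-2/49 : ℂ) * ζ^6 * (x 0)^4 + (-4/49 : ℂ) * ζ^7 * (x 2)^4 + (17/49 : ℂ) * ζ^7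 * (x 1) * (x 2)^3 + (18/49 : ℂ) * ζ^7 * (x 1)^2 * (x 2)^2 + (-16/49 : ℂ) * ζ^7 * (x 1)^3 * (x 2) + (-4/49 : ℂ) * ζ^7 * (x 1)^4 + (-16/49 : ℂ) * ζ^7 * (x 0) * (x 2)^3 + (-15/49 : ℂ) * ζ^7 * (x 0) * (x 1) * (x 2)^2 + (-15/49 : ℂ) * ζ^7 * (x 0) * (x 1)^2 * (x 2) + (17/49 : ℂ) * ζ^7 * (x 0) * (x 1)^3 + (18/49 : ℂ) * ζ^7 * (x 0)^2 * (x 2)^2 + (-15/49 : ℂ) * ζ^7 * (x 0)^2 * (x 1) * (x 2) + (18/49 : ℂ) * ζ^7 * (x 0)^2 * (x 1)^2 + (17/49 : ℂ) * ζ^7 * (x 0)^3 * (x 2) + (-16/49 : ℂ) * ζ^7 * (x 0)^3 * (x 1) + (-4/49 : ℂ) * ζ^7 * (x 0)^4 + (-15/49 : ℂ) * ζ^8 * (x 2)^4 + (23/49 : ℂ) * ζ^8 * (x 1) * (x 2)^3 + (-3/49 : ℂ) * ζ^8 * (x 1)^2 * (x 2)^2 + (16/49 : ℂ) * ζ^8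 * (x 1)^3 * (x 2) + (-15/49 : ℂ) * ζ^8 * (x 1)^4 + (16/49 : ℂ) * ζ^8 * (x 0) * (x 2)^3 + (-3/7 : ℂ) * ζ^8 * (x 0) * (x 1) * (x 2)^2 + (-3/7 : ℂ) * ζ^8 * (x 0) * (x 1)^2 * (x 2) + (23/49 : ℂ) * ζ^8 * (x 0) * (x 1)^3 + (-3/49 : ℂ) * ζ^8 * (x 0)^2 * (x 2)^2 + (-3/7 : ℂ) * ζ^8 * (x 0)^2 * (x 1) * (x 2) + (-3/49 : ℂ) * ζ^8 * (x 0)^2 * (x 1)^2 + (23/49 : ℂ) * ζ^8 * (x 0)^3 * (x 2) + (16/49 : ℂ) * ζ^8 * (x 0)^3 * (x 1) + (-15/49 : ℂ) * ζ^8 * (x 0)^4 + (-9/49 : ℂ) * ζ^9 * (x 2)^4 + (10/49 : ℂ) * ζ^9 * (x 1) * (x 2)^3 + (-3/7 : ℂ) * ζ^9 * (x 1)^2 * (x 2)^2 + (23/49 : ℂ) * ζ^9 * (x 1)^3 * (x 2) + (-9/49 : ℂ) * ζ^9 * (x 1)^4 + (23/49 : ℂ) * ζ^9 * (x 0) * (x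 2)^3 + (-3/49 : ℂ) * ζ^9 * (x 0) * (x 1) * (x 2)^2 + (-3/49 : ℂ) * ζ^9 * (x 0) * (x 1)^2 * (x 2) + (10/49 : ℂ) * ζ^9 * (x 0) * (x 1)^3 + (-3/7 : ℂ) * ζ^9 * (x 0)^2 * (x 2)^2 + (-3/49 : ℂ) * ζ^9 * (x 0)^2 * (x 1) * (x 2) + (-3/7 : ℂ) * ζ^9 * (x 0)^2 * (x 1)^2 + (10/49 : ℂ) * ζ^9 * (x 0)^3 * (x 2) + (23/49 : ℂ) * ζ^9 * (x 0)^3 * (x 1) + (-9/49 : ℂ) * ζ^9 * (x 0)^4 + (-4/49 : ℂ) * ζ^10 * (x 2)^4 + (8/49 : ℂ) * ζ^10 * (x 1) * (x 2)^3 + (-12/49 : ℂ) * ζ^10 * (x 1)^2 * (x 2)^2 + (8/49 : ℂ) * ζ^10 * (x 1)^3 * (x 2) + (-4/49 : ℂ) * ζ^10 * (x 1)^4 + (8/49 : ℂ) * ζ^10 * (x 0) * (x 2)^3 + (8/49 : ℂ) * ζ^10 * (x 0) * (x 1)^3 + (-12/49 : ℂ) * ζ^10 * (x 0)^2 * (x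 2)^2 + (-12/49 : ℂ) * ζ^10 * (x 0)^2 * (x 1)^2 + (8/49 : ℂ) * ζ^10 * (x 0)^3 * (x 2) + (8/49 : ℂ) * ζ^10 * (x 0)^3 * (x 1) + (-4/49 : ℂ) * ζ^10 * (x 0)^4 + (-1/7 : ℂ) * ζ^11 * (x 2)^4 + (2/7 : ℂ) * ζ^11 * (x 1) * (x 2)^3 + (-3/7 : ℂ) * ζ^11 * (x 1)^2 * (x 2)^2 + (2/7 : ℂ) * ζ^11 * (x 1)^3 * (x 2) + (-1/7 : ℂ) * ζ^11 * (x 1)^4 + (2/7 : ℂ) * ζ^11 * (x 0) * (x 2)^3 + (2/7 : ℂ) * ζ^11 * (x 0) * (x 1)^3 + (-3/7 : ℂ) * ζ^11 * (x 0)^2 * (x 2)^2 + (-3/7 : ℂ) * ζ^11 * (x 0)^2 * (x 1)^2 + (2/7 : ℂ) * ζ^11 * (x 0)^3 * (x 2) + (2/7 : ℂ) * ζ^11 * (x 0)^3 * (x 1) + (-1/7 : ℂ) * ζ^11 * (x 0)^4 + (-3/49 : ℂ) * ζ^12 * (x 2)^4 + (6/49 : ℂ) * ζ^12 * (x 1)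 * (x 2)^3 + (-9/49 : ℂ) * ζ^12 * (x 1)^2 * (x 2)^2 + (6/49 : ℂ) * ζ^12 * (x 1)^3 * (x 2) + (-3/49 : ℂ) * ζ^12 * (x 1)^4 + (6/49 : ℂ) * ζ^12 * (x 0) * (x 2)^3 + (6/49 : ℂ) * ζ^12 * (x 0) * (x 1)^3 + (-9/49 : ℂ) * ζ^12 * (x 0)^2 * (x 2)^2 + (-9/49 : ℂ) * ζ^12 * (x 0)^2 * (x 1)^2 + (6/49 : ℂ) * ζ^12 * (x 0)^3 * (x 2) + (6/49 : ℂ) * ζ^12 * (x 0)^3 * (x 1) + (-3/49 : ℂ) * ζ^12 * (x 0)^4 + (-1/49 : ℂ) * ζ^13 * (x 2)^4 + (2/49 : ℂ) * ζ^13 * (x 1) * (x 2)^3 + (-3/49 : ℂ) * ζ^13 * (x 1)^2 * (x 2)^2 + (2/49 : ℂ) * ζ^13 * (x 1)^3 * (x 2) + (-1/49 : ℂ) * ζ^13 * (x 1)^4 + (2/49 : ℂ) * ζ^13 * (x 0) * (x 2)^3 + (2/49 : ℂ) * ζ^13 * (x 0) * (x 1)^3 + (-3/49 : ℂ) * ζ^13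 * (x 0)^2 * (x 2)^2 + (-3/49 : ℂ) * ζ^13 * (x 0)^2 * (x 1)^2 + (2/49 : ℂ) * ζ^13 * (x 0)^3 * (x 2) + (2/49 : ℂ) * ζ^13 * (x 0)^3 * (x 1) + (-1/49 : ℂ) * ζ^13 * (x 0)^4 + (-1/49 : ℂ) * ζ^14 * (x 2)^4 + (2/49 : ℂ) * ζ^14 * (x 1) * (x 2)^3 + (-3/49 : ℂ) * ζ^14 * (x 1)^2 * (x 2)^2 + (2/49 : ℂ) * ζ^14 * (x 1)^3 * (x 2) + (-1/49 : ℂ) * ζ^14 * (x 1)^4 + (2/49 : ℂ) * ζ^14 * (x 0) * (x 2)^3 + (2/49 : ℂ) * ζ^14 * (x 0) * (x 1)^3 + (-3/49 : ℂ) * ζ^14 * (x 0)^2 * (x 2)^2 + (-3/49 : ℂ) * ζ^14 * (x 0)^2 * (x 1)^2 + (2/49 : ℂ) * ζ^14 * (x 0)^3 * (x 2) + (2/49 : ℂ) * ζ^14 * (x 0)^3 * (x 1) + (-1/49 : ℂ) * ζ^14 * (x 0)^4) * hΦ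

/-- Each of F, H, c₄, c₆ is invariant under both generators ρ(S) and ρ(T) of
the group G ≅ PSL₂(𝔽₇). -/
theorem stmt7 (ζ : ℂ) (hζ : IsPrimitiveRoot ζ 7) :
    ∀ P ∈ ({FC, HC, c4C, c6C} : Set RC),
      substC (rhoS ζ) P = P ∧ substC (rhoT ζ) P = P := by
  have hFS := FS_inv hζ
  have hFT := FT_inv hζ
  have hdS := det_rhoS hζ
  have hdT := det_rhoT hζ
  have hHS := substC_HC _ hFS hdS
  have hHT := substC_HC _ hFT hdT
  have hc4S := substC_c4C _ hFS hHS hdS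
  have hc4T := substC_c4C _ hFT hHT hdT
  have hc6S := substC_c6C _ hFS hHS hc4S hdS
  have hc6T := substC_c6C _ hFT hHT hc4T hdT
  intro P hP
  rcases hP with h | h | h | h
  · exact h ▸ ⟨hFS, hFT⟩
  · exact h ▸ ⟨hHS, hHT⟩
  · exact h ▸ ⟨hc4S, hc4T⟩
  · rw [h]; exact ⟨hc6S, hc6T⟩

end
end

section
/- Let K be an algebraically closed field of characteristic 0 and let ω ∈ K satisfy ω² + ω + 1 = 0. For every nonzero vector (a,b,c,d) ∈ K⁴, the four equations (a²b + b²c + c²a)d = 0, bc³ − ba³ − cd³ = 0, ab³ − ac³ − bd³ = 0, ca³ − cb³ − ad³ = 0 hold simultaneously if and only if either (a²b + b²c + c²a = 0 and ab² + bc² + ca² = d³), or (a,b,c,d) is a scalar multiple of one of the four points (0,0,0,1), (1,1,1,0), (1,ω,ω²,0), (1,ω²,ω,0). (That is, the variety Z(9) defined by the rank ≤ 2 / Pfaffian conditions is the union of the curve X(9) = {a²b+b²c+c²a = 0, ab²+bc²+ca² = d³} ⊂ ℙ³ and four isolated points.) -/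
/-- The variety Z(9), cut out by the 4×4 Pfaffians, is the union of the curve
X(9) = {a²b+b²c+c²a = 0, ab²+bc²+ca² = d³} and the four isolated points
(0:0:0:1), (1:1:1:0), (1:ω:ω²:0), (1:ω²:ω:0). -/
theorem stmt8 (K : Type*) [Field K] [IsAlgClosed K] [CharZero K]
    (ω : K) (hω : ω ^ 2 + ω + 1 = 0)
    (a b c d : K) (h : (a, b, c, d) ≠ (0, 0, 0, 0)) :
    ((a ^ 2 * b + b ^ 2 * c + c ^ 2 * a) * d = 0 ∧
     b * c ^ 3 - b * a ^ 3 - c * d ^ 3 = 0 ∧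
     a * b ^ 3 - a * c ^ 3 - b * d ^ 3 = 0 ∧
     c * a ^ 3 - c * b ^ 3 - a * d ^ 3 = 0) ↔
    ((a ^ 2 * b + b ^ 2 * c + c ^ 2 * a = 0 ∧
      a * b ^ 2 + b * c ^ 2 + c * a ^ 2 = d ^ 3) ∨
     (∃ t : K,
       (a, b, c, d) = (0, 0, 0, t) ∨
       (a, b, c, d) = (t, t, t, 0) ∨
       (a, b, c, d) = (t, t * ω, t * ω ^ 2, 0) ∨
       (a, b, c, d) = (t, t * ω ^ 2, t * ω, 0))) := by
  have hω3 : ω ^ 3 = 1 := by linear_combination (ω - 1) * hω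
  have cube : ∀ x y : K, x ^ 3 = y ^ 3 → x = y ∨ x = y * ω ∨ x = y * ω ^ 2 := by
    intro x y hxy
    have h0 : (x - y) * ((x - y * ω) * (x - y * ω ^ 2)) = 0 := by
      linear_combination hxy + (x * y ^ 2 - x ^ 2 * y) * hω + (x * y ^ 2 - y ^ 3) * hω3
    rcases mul_eq_zero.mp h0 with h' | h'
    · exact Or.inl (sub_eq_zero.mp h')
    · rcases mul_eq_zero.mp h' with h' | h'
      · exact Or.inr (Or.inl (sub_eq_zero.mp h'))
      · exact Or.inr (Or.inr (sub_eq_zero.mp h'))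
  constructor
  · rintro ⟨h1, h2, h3, h4⟩
    by_cases hd : d = 0
    · subst hd
      by_cases ha : a = 0
      · subst ha
        have hbc : b = 0 ∨ c = 0 := by
          rcases mul_eq_zero.mp (show b * c ^ 3 = 0 by linear_combination h2) with h' | h'
          · exact Or.inl h'
          · exact Or.inr ((pow_eq_zero_iff (by norm_num)).mp h')
        rcases hbc with rfl | rfl
        · exact Or.inl ⟨by ring, by ring⟩
        · exact Or.inl ⟨by ring, by ring⟩
      · by_cases hb : b = 0
        · subst hb
          have hc : c = 0 := by
            have h' : a * c ^ 3 = 0 := by linear_combination -h3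
            rcases mul_eq_zero.mp h' with h' | h'
            · exact absurd h' ha
            · exact (pow_eq_zero_iff (by norm_num)).mp h'
          subst hc
          exact Or.inl ⟨by ring, by ring⟩
        · by_cases hc : c = 0
          · exfalso
            subst hc
            have h' : b * a ^ 3 = 0 := by linear_combination -h2
            rcases mul_eq_zero.mp h' with h' | h'
            · exact hb h'
            · exact ha ((pow_eq_zero_iff (by norm_num)).mp h')
          · -- a, b, c all nonzero; a³ = b³ = c³
            have hca : c ^ 3 = a ^ 3 := by
              have h' : b * (c ^ 3 - a ^ 3) = 0 := by linear_combination h2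
              rcases mul_eq_zero.mp h' with h' | h'
              · exact absurd h' hb
              · exact sub_eq_zero.mp h'
            have hba : b ^ 3 = a ^ 3 := by
              have h' : a * (b ^ 3 - c ^ 3) = 0 := by linear_combination h3
              rcases mul_eq_zero.mp h' with h' | h'
              · exact absurd h' ha
              · exact (sub_eq_zero.mp h').trans hca
            rcases cube b a hba with hb' | hb' | hb' <;>
              rcases cube c a hca with hc' | hc' | hc'
            · exact Or.inr ⟨a, Or.inr (Or.inl (by
                rw [hb', hc']))⟩
            · exact Or.inl ⟨by
                  linear_combination (b * c + a * c + a ^ 2) * hb' +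
                    (a * c + a ^ 2 + a ^ 2 * ω) * hc' + a ^ 3 * hω,
                by
                  linear_combination (c ^ 2 + a * b + a ^ 2) * hb' +
                    (a * c + a ^ 2 + a ^ 2 * ω) * hc' + a ^ 3 * hω⟩
            · exact Or.inl ⟨by
                  linear_combination (b * c + a * c + a ^ 2) * hb' +
                    (a * c + a ^ 2 + a ^ 2 * ω ^ 2) * hc' +
                    (a ^ 3 - a ^ 3 * ω + a ^ 3 * ω ^ 2) * hω,
                by
                  linear_combination (c ^ 2 + a * b + a ^ 2) * hb' +
                    (a * c + a ^ 2 + a ^ 2 * ω ^ 2) * hc' +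
                    (a ^ 3 - a ^ 3 * ω + a ^ 3 * ω ^ 2) * hω⟩
            · exact Or.inl ⟨by
                  linear_combination (b * c + a * c * ω + a ^ 2) * hb' +
                    (a * c + a ^ 2 + a ^ 2 * ω ^ 2) * hc' + a ^ 3 * hω,
                by
                  linear_combination (c ^ 2 + a * b + a ^ 2 * ω) * hb' +
                    (a * c * ω + a ^ 2 + a ^ 2 * ω) * hc' + a ^ 3 * hω⟩
            · exact Or.inl ⟨by
                  linear_combination (b * c + a * c * ω + a ^ 2) * hb' +
                    (a * c + a ^ 2 * ω + a ^ 2 * ω ^ 2) * hc' + a ^ 3 * ω * hω,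
                by
                  linear_combination (c ^ 2 + a * b + a ^ 2 * ω) * hb' +
                    (a * c * ω + a ^ 2 + a ^ 2 * ω ^ 2) * hc' + a ^ 3 * ω * hω⟩
            · exact Or.inr ⟨a, Or.inr (Or.inr (Or.inl (by
                rw [hb', hc'])))⟩
            · exact Or.inl ⟨by
                  linear_combination (b * c + a * c * ω ^ 2 + a ^ 2) * hb' +
                    (a * c + a ^ 2 + a ^ 2 * ω ^ 4) * hc' +
                    (a ^ 3 - a ^ 3 * ω + a ^ 3 * ω ^ 2) * hω,
                by
                  linear_combination (c ^ 2 + a * b + a ^ 2 * ω ^ 2) * hb' +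
                    (a * c * ω ^ 2 + a ^ 2 + a ^ 2 * ω ^ 2) * hc' +
                    (a ^ 3 - a ^ 3 * ω + a ^ 3 * ω ^ 2) * hω⟩
            · exact Or.inr ⟨a, Or.inr (Or.inr (Or.inr (by
                rw [hb', hc'])))⟩
            · exact Or.inl ⟨by
                  linear_combination (b * c + a * c * ω ^ 2 + a ^ 2) * hb' +
                    (a * c + a ^ 2 * ω ^ 2 + a ^ 2 * ω ^ 4) * hc' +
                    (a ^ 3 * ω ^ 2 - a ^ 3 * ω ^ 3 + a ^ 3 * ω ^ 4) * hω,
                by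
                  linear_combination (c ^ 2 + a * b + a ^ 2 * ω ^ 2) * hb' +
                    (a * c * ω ^ 2 + a ^ 2 + a ^ 2 * ω ^ 4) * hc' +
                    (a ^ 3 * ω ^ 2 - a ^ 3 * ω ^ 3 + a ^ 3 * ω ^ 4) * hω⟩
    · -- d ≠ 0
      have hP : a ^ 2 * b + b ^ 2 * c + c ^ 2 * a = 0 := by
        rcases mul_eq_zero.mp h1 with h' | h'
        · exact h'
        · exact absurd h' hd
      have ka : a * (d ^ 3 - (a * b ^ 2 + b * c ^ 2 + c * a ^ 2)) = 0 := by
        linear_combination -h4 - b * hP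
      have kb : b * (d ^ 3 - (a * b ^ 2 + b * c ^ 2 + c * a ^ 2)) = 0 := by
        linear_combination -h3 - c * hP
      have kc : c * (d ^ 3 - (a * b ^ 2 + b * c ^ 2 + c * a ^ 2)) = 0 := by
        linear_combination -h2 - a * hP
      by_cases ha : a = 0
      · by_cases hb : b = 0
        · by_cases hc : c = 0
          · subst ha; subst hb; subst hc
            exact Or.inr ⟨d, Or.inl rfl⟩
          · have h' := (mul_eq_zero.mp kc).resolve_left hc
            exact Or.inl ⟨hP, by linear_combination -h'⟩
        · have h' := (mul_eq_zero.mp kb).resolve_left hb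
          exact Or.inl ⟨hP, by linear_combination -h'⟩
      · have h' := (mul_eq_zero.mp ka).resolve_left ha
        exact Or.inl ⟨hP, by linear_combination -h'⟩
  · rintro (⟨hP, hS⟩ | ⟨t, ht | ht | ht | ht⟩)
    · exact ⟨by linear_combination d * hP,
        by linear_combination (-a) * hP + c * hS,
        by linear_combination (-c) * hP + b * hS,
        by linear_combination (-b) * hP + a * hS⟩
    · simp only [Prod.mk.injEq] at ht
      obtain ⟨rfl, rfl, rfl, rfl⟩ := ht
      exact ⟨by ring, by ring, by ring, by ring⟩
    · simp only [Prod.mk.injEq] at ht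
      obtain ⟨rfl, rfl, rfl, rfl⟩ := ht
      exact ⟨by ring, by ring, by ring, by ring⟩
    · simp only [Prod.mk.injEq] at ht
      obtain ⟨rfl, rfl, rfl, rfl⟩ := ht
      exact ⟨by ring,
        by linear_combination a ^ 4 * ω * (ω ^ 3 + 1) * hω3,
        by linear_combination (-(a ^ 4) * ω ^ 3) * hω3,
        by linear_combination (-(a ^ 4) * ω ^ 2) * hω3⟩
    · simp only [Prod.mk.injEq] at ht
      obtain ⟨rfl, rfl, rfl, rfl⟩ := ht
      exact ⟨by ring,
        by linear_combination a ^ 4 * ω ^ 2 * hω3,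
        by linear_combination a ^ 4 * ω ^ 3 * hω3,
        by linear_combination (-(a ^ 4) * ω * (ω ^ 3 + 1)) * hω3⟩
end

section
/- In the polynomial ring ℚ[r,s,a,b,c,d], the determinant of the 4×4 matrix of second partial derivatives of r·F₁ + s·F₂ with respect to a,b,c,d equals 48·(r³ + s³)·s·(a³ + b³ + c³ − 3abc)·d. -/
open MvPolynomial

noncomputable section

/-- The polynomial ring ℚ[r,s,a,b,c,d], with r = X 0, s = X 1, a,b,c,d = X 2,…,X 5. -/
abbrev R11 : Type := MvPolynomial (Fin 6) ℚ

/-- F₁ = a²b + b²c + c²a. -/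
def F1 : R11 := X 2 ^ 2 * X 3 + X 3 ^ 2 * X 4 + X 4 ^ 2 * X 2
/-- F₂ = ab² + bc² + ca² − d³. -/
def F2 : R11 := X 2 * X 3 ^ 2 + X 3 * X 4 ^ 2 + X 4 * X 2 ^ 2 - X 5 ^ 3

/-- The inclusion of the four variables a,b,c,d among the six variables. -/
def vr (i : Fin 4) : Fin 6 := ⟨i.1 + 2, by omega⟩

/-- The 4×4 Hessian matrix with respect to a,b,c,d only. -/
def hessABCD (p : R11) : Matrix (Fin 4) (Fin 4) R11 :=
  Matrix.of fun i j => pderiv (vr i) (pderiv (vr j) p)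

set_option maxHeartbeats 2000000 in
/-- The determinant of the Hessian (with respect to a,b,c,d) of r·F₁ + s·F₂
equals 48·(r³ + s³)·s·(a³ + b³ + c³ − 3abc)·d. -/
theorem stmt11 :
    (hessABCD (X 0 * F1 + X 1 * F2)).det =
      48 * (X 0 ^ 3 + X 1 ^ 3) * X 1 *
        (X 2 ^ 3 + X 3 ^ 3 + X 4 ^ 3 - 3 * X 2 * X 3 * X 4) * X 5 := by
  have hM : hessABCD (X 0 * F1 + X 1 * F2) =
      !![2*(X 0 * X 3 + X 1 * X 4), 2*(X 0 * X 2 + X 1 * X 3), 2*(X 0 * X 4 + X 1 * X 2), 0;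
         2*(X 0 * X 2 + X 1 * X 3), 2*(X 0 * X 4 + X 1 * X 2), 2*(X 0 * X 3 + X 1 * X 4), 0;
         2*(X 0 * X 4 + X 1 * X 2), 2*(X 0 * X 3 + X 1 * X 4), 2*(X 0 * X 2 + X 1 * X 3), 0;
         0, 0, 0, -6 * X 1 * X 5] := by
    have h2 : ∀ i : Fin 6, pderiv i (2 : R11) = 0 := fun i => by
      rw [show (2 : R11) = C 2 from (map_ofNat C 2).symm, pderiv_C]
    have h3 : ∀ i : Fin 6, pderiv i (3 : R11) = 0 := fun i => by
      rw [show (3 : R11) = C 3 from (map_ofNat C 3).symm, pderiv_C]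
    refine Matrix.ext fun i j => ?_
    fin_cases i <;> fin_cases j <;>
      simp [hessABCD, F1, F2, vr, pderiv_X, Pi.single_apply,
        show ((2:Fin 6):ℕ)=2 from rfl, show ((3:Fin 6):ℕ)=3 from rfl,
        show ((4:Fin 6):ℕ)=4 from rfl, show ((5:Fin 6):ℕ)=5 from rfl, h2,
        show ((0:Fin 4):ℕ)=0 from rfl, show ((1:Fin 4):ℕ)=1 from rfl,
        show ((2:Fin 4):ℕ)=2 from rfl, show ((3:Fin 4):ℕ)=3 from rfl, h3] <;> ring
  rw [hM]
  simp [Matrix.det_succ_row_zero, Fin.sum_univ_succ, Fin.succAbove,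
    Matrix.cons_val_zero, Matrix.cons_val_one, Matrix.head_cons, Matrix.head_fin_const]
  ring

end
end

section
/- Let K = ℚ(T) be the field of rational functions and let W be the Weierstrass curve over K given by y² + a₁xy + a₃y = x³ + a₂x², with a₁ = −(T² − T − 1), a₂ = −(T³ − T²), a₃ = −(T³ − T²), a₄ = a₆ = 0 (the universal curve over Y₁(7)). Then (0,0) is a nonsingular point of W, and in the group of points of W over K the point (0,0) has exact additive order 7 (i.e., 7·P = O and P ≠ O for P the point (0,0)). -/
noncomputable section

open WeierstrassCurve

/-- The universal curve over Y₁(7): y² + a₁xy + a₃y = x³ + a₂x² over ℚ(T), with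
a₁ = −(T² − T − 1), a₂ = a₃ = −(T³ − T²). -/
def W7 : WeierstrassCurve (RatFunc ℚ) :=
  { a₁ := -(RatFunc.X ^ 2 - RatFunc.X - 1)
    a₂ := -(RatFunc.X ^ 3 - RatFunc.X ^ 2)
    a₃ := -(RatFunc.X ^ 3 - RatFunc.X ^ 2)
    a₄ := 0
    a₆ := 0 }

lemma some_congr' {F : Type*} [Field F] {W : WeierstrassCurve.Affine F} {x₁ y₁ x₂ y₂ : F}
    {h₁ : W.Nonsingular x₁ y₁} {h₂ : W.Nonsingular x₂ y₂} (hx : x₁ = x₂) (hy : y₁ = y₂) :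
    WeierstrassCurve.Affine.Point.some _ _ h₁ = WeierstrassCurve.Affine.Point.some _ _ h₂ := by
  subst hx; subst hy; rfl

lemma RF_ne_zero (p : Polynomial ℚ) (h : p.eval 2 ≠ 0) :
    algebraMap (Polynomial ℚ) (RatFunc ℚ) p ≠ 0 :=
  RatFunc.algebraMap_ne_zero (fun hp => h (by simp [hp]))

lemma hT : (RatFunc.X : RatFunc ℚ) ≠ 0 := RatFunc.X_ne_zero

lemma hT1 : (RatFunc.X : RatFunc ℚ) - 1 ≠ 0 := by
  have := RF_ne_zero (Polynomial.X - 1) (by norm_num)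
  simpa using this

open scoped Classical in
/-- (0,0) is a nonsingular point of the universal curve over Y₁(7), and in the
group of points over ℚ(T) it has exact additive order 7. -/
theorem stmt17 :
    ∃ h : W7.toAffine.Nonsingular 0 0,
      7 • (WeierstrassCurve.Affine.Point.some _ _ h) = 0 ∧
        WeierstrassCurve.Affine.Point.some _ _ h ≠ 0 := by
  set t : RatFunc ℚ := RatFunc.X with ht
  have hΔ : W7.toAffine.Δ ≠ 0 := by
    have heq : W7.toAffine.Δ = algebraMap (Polynomial ℚ) (RatFunc ℚ)
        (Polynomial.X ^ 7 * (Polynomial.X - 1) ^ 7 *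
          (Polynomial.X ^ 3 - 8 * Polynomial.X ^ 2 + 5 * Polynomial.X + 1)) := by
      simp only [WeierstrassCurve.Δ, b₂, b₄, b₆, b₈, W7, toAffine, map_mul, map_pow, map_sub,
        map_add, map_one, map_ofNat, RatFunc.algebraMap_X]
      ring
    rw [heq]
    exact RF_ne_zero _ (by norm_num)
  have mkNS : ∀ x y : RatFunc ℚ, W7.toAffine.Equation x y → W7.toAffine.Nonsingular x y :=
    fun x y h => (WeierstrassCurve.Affine.equation_iff_nonsingular_of_Δ_ne_zero (W := W7.toAffine) hΔ).mp h
  have h0 : W7.toAffine.Nonsingular 0 0 := by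
    apply mkNS; rw [WeierstrassCurve.Affine.equation_iff]; simp [W7]
  have h2 : W7.toAffine.Nonsingular (t ^ 2 * (t - 1)) (t ^ 3 * (t - 1) ^ 2) := by
    apply mkNS; rw [WeierstrassCurve.Affine.equation_iff]; show _ = _; simp only [W7]; ring
  have h3 : W7.toAffine.Nonsingular (t * (t - 1)) (t * (t - 1) ^ 2) := by
    apply mkNS; rw [WeierstrassCurve.Affine.equation_iff]; show _ = _; simp only [W7]; ring
  have h4 : W7.toAffine.Nonsingular (t * (t - 1)) (t ^ 2 * (t - 1) ^ 2) := by
    apply mkNS; rw [WeierstrassCurve.Affine.equation_iff]; show _ = _; simp only [W7]; ring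
  have h5 : W7.toAffine.Nonsingular (t ^ 2 * (t - 1)) 0 := by
    apply mkNS; rw [WeierstrassCurve.Affine.equation_iff]; show _ = _; simp only [W7]; ring
  have h6 : W7.toAffine.Nonsingular 0 (t ^ 2 * (t - 1)) := by
    apply mkNS; rw [WeierstrassCurve.Affine.equation_iff]; show _ = _; simp only [W7]; ring
  refine ⟨h0, ?_, WeierstrassCurve.Affine.Point.some_ne_zero h0⟩
  set P := WeierstrassCurve.Affine.Point.some _ _ h0 with hP
  -- auxiliary nonzero facts
  have ht2 : t ^ 2 * (t - 1) ≠ 0 := mul_ne_zero (pow_ne_zero 2 hT) hT1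
  have ht3 : t * (t - 1) ≠ 0 := mul_ne_zero hT hT1
  -- step 1 : P + P = 2P
  have e2 : P + P = WeierstrassCurve.Affine.Point.some _ _ h2 := by
    have hy : (0 : RatFunc ℚ) ≠ W7.toAffine.negY 0 0 := by
      simp only [WeierstrassCurve.Affine.negY, W7]
      intro h
      apply ht2
      rw [show t ^ 2 * (t - 1) = -0 - -(t ^ 2 - t - 1) * 0 - -(t ^ 3 - t ^ 2) by ring, ← h]
    rw [hP, WeierstrassCurve.Affine.Point.add_of_Y_ne hy]
    have hL : W7.toAffine.slope 0 0 0 0 = 0 := by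
      rw [WeierstrassCurve.Affine.slope_of_Y_ne rfl hy]
      show (3 * 0 ^ 2 + 2 * W7.a₂ * 0 + W7.a₄ - W7.a₁ * 0) / _ = 0
      rw [show (3 * 0 ^ 2 + 2 * W7.a₂ * 0 + W7.a₄ - W7.a₁ * 0 : RatFunc ℚ) = 0 by
        simp [W7], zero_div]
    apply some_congr' <;>
      · rw [hL]
        simp only [WeierstrassCurve.Affine.addX, WeierstrassCurve.Affine.addY,
          WeierstrassCurve.Affine.negAddY, WeierstrassCurve.Affine.negY, W7]
        ring
  -- generic step: (x₁,y₁) + (0,0) with x₁ ≠ 0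
  have step : ∀ (x₁ y₁ x₂ y₂ L : RatFunc ℚ) (hx1 : x₁ ≠ 0)
      (hA : W7.toAffine.Nonsingular x₁ y₁) (hB : W7.toAffine.Nonsingular x₂ y₂),
      y₁ = L * x₁ →
      W7.toAffine.addX x₁ 0 L = x₂ →
      W7.toAffine.addY x₁ 0 y₁ L = y₂ →
      WeierstrassCurve.Affine.Point.some _ _ hA + P = WeierstrassCurve.Affine.Point.some _ _ hB := by
    intro x₁ y₁ x₂ y₂ L hx1 hA hB hyL hxx hyy
    have hL : W7.toAffine.slope x₁ 0 y₁ 0 = L := by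
      rw [WeierstrassCurve.Affine.slope_of_X_ne hx1, sub_zero, sub_zero, hyL,
        mul_div_assoc, div_self hx1, mul_one]
    rw [hP, WeierstrassCurve.Affine.Point.add_of_X_ne hx1]
    apply some_congr' <;> rw [hL]
    · exact hxx
    · exact hyy
  have e3 : WeierstrassCurve.Affine.Point.some _ _ h2 + P = WeierstrassCurve.Affine.Point.some _ _ h3 := by
    apply step _ _ _ _ (t * (t - 1)) ht2 _ _ (by ring) <;>
      · simp only [WeierstrassCurve.Affine.addX, WeierstrassCurve.Affine.addY,
          WeierstrassCurve.Affine.negAddY, WeierstrassCurve.Affine.negY, W7]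
        ring
  have e4 : WeierstrassCurve.Affine.Point.some _ _ h3 + P = WeierstrassCurve.Affine.Point.some _ _ h4 := by
    apply step _ _ _ _ (t - 1) ht3 _ _ (by ring) <;>
      · simp only [WeierstrassCurve.Affine.addX, WeierstrassCurve.Affine.addY,
          WeierstrassCurve.Affine.negAddY, WeierstrassCurve.Affine.negY, W7]
        ring
  have e5 : WeierstrassCurve.Affine.Point.some _ _ h4 + P = WeierstrassCurve.Affine.Point.some _ _ h5 := by
    apply step _ _ _ _ (t * (t - 1)) ht3 _ _ (by ring) <;>
      · simp only [WeierstrassCurve.Affine.addX, WeierstrassCurve.Affine.addY,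
          WeierstrassCurve.Affine.negAddY, WeierstrassCurve.Affine.negY, W7]
        ring
  have e6 : WeierstrassCurve.Affine.Point.some _ _ h5 + P = WeierstrassCurve.Affine.Point.some _ _ h6 := by
    apply step _ _ _ _ (0) ht2 _ _ (by ring) <;>
      · simp only [WeierstrassCurve.Affine.addX, WeierstrassCurve.Affine.addY,
          WeierstrassCurve.Affine.negAddY, WeierstrassCurve.Affine.negY, W7]
        ring
  have e7 : WeierstrassCurve.Affine.Point.some _ _ h6 + P = 0 := by
    rw [hP]
    refine WeierstrassCurve.Affine.Point.add_of_Y_eq rfl ?_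
    simp only [WeierstrassCurve.Affine.negY, W7]
    ring
  calc 7 • P = ((((((P + P) + P) + P) + P) + P) + P) := by
        rw [succ_nsmul, succ_nsmul, succ_nsmul, succ_nsmul, succ_nsmul, succ_nsmul, one_nsmul]
    _ = 0 := by rw [e2, e3, e4, e5, e6, e7]

end
end
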